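/- Let A be an abelian category and ξ : 0 → K → X →^{α} Y → 0 a short exact sequence. Then α is right minimal if and only if the connecting map c(ξ, K) : Hom(K, K) → Ext¹(Y, K) is a right minimal morphism of left Γ(K)-modules. -/

import Mathlib

set_option linter.unusedSectionVars false

open CategoryTheory Abelian Limits

universe w v u

attribute [local instance] CategoryTheory.Abelian.hasFiniteBiproducts

variable {A : Type u} [Category.{v} A] [Abelian A]

/-- `M` belongs to `add K`: it is a direct summand of a finite direct sum of copies of `K`. -/
def InAdd (K M : A) : Prop :=
  ∃ (n : ℕ) (s : M ⟶ ⨁ (fun _ : Fin n => K)) (r : (⨁ fun _ : Fin n => K) ⟶ M),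
    s ≫ r = 𝟙 M

/-- `α` factors through `α'`. -/
def Factors {X X' Y : A} (α : X ⟶ Y) (α' : X' ⟶ Y) : Prop :=
  ∃ v : X ⟶ X', v ≫ α' = α

/-- `α` and `α'` are right equivalent. -/
def RightEquiv {X X' Y : A} (α : X ⟶ Y) (α' : X' ⟶ Y) : Prop :=
  Factors α α' ∧ Factors α' α

/-- A morphism is right minimal. -/
def RightMinimal {X Y : A} (α : X ⟶ Y) : Prop :=
  ∀ v : X ⟶ X, v ≫ α = α → IsIso v

/-- A short exact sequence `0 → K → X → Y → 0`. -/
structure SES (K Y : A) where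
  X : A
  i : K ⟶ X
  p : X ⟶ Y
  zero : i ≫ p = 0
  shortExact : (ShortComplex.mk i p zero).ShortExact

variable [HasExt.{w} A]

lemma Ext.mk₀_add' {X Y : A} (f g : X ⟶ Y) :
    Ext.mk₀ (f + g) = Ext.mk₀ f + Ext.mk₀ g := by
  letI := HasDerivedCategory.standard A
  apply Ext.ext
  simp [Ext.add_hom, ShiftedHom.mk₀, Functor.map_add]

/-- The class `[ξ] ∈ Ext¹(Y, K)` of a short exact sequence `ξ`. -/
noncomputable def SES.cls {K Y : A} (E : SES K Y) : Ext Y K 1 :=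
  E.shortExact.extClass

/-- The class `[u.ξ]` of the pushout of `ξ` along `u`. -/
noncomputable def SES.push {K Y Z : A} (E : SES K Y) (u : K ⟶ Z) : Ext Y Z 1 :=
  E.cls.comp (Ext.mk₀ u) (add_zero 1)

noncomputable instance extSMulEnd (Y K : A) : SMul (End K) (Ext Y K 1) :=
  ⟨fun g e => e.comp (Ext.mk₀ g) (add_zero 1)⟩

lemma extSmul_def {Y K : A} (g : End K) (e : Ext Y K 1) :
    g • e = e.comp (Ext.mk₀ g) (add_zero 1) := rfl

/-- `Ext¹(Y, K)` as a left module over `Γ(K) = End K`, via pushout. -/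
noncomputable instance extModuleEnd (Y K : A) : Module (End K) (Ext Y K 1) where
  one_smul e := by rw [extSmul_def]; exact Ext.comp_mk₀_id e
  mul_smul g h e := by
    rw [extSmul_def, extSmul_def, extSmul_def,
      Ext.comp_assoc_of_third_deg_zero, Ext.mk₀_comp_mk₀]
    rfl
  smul_add g e f := by
    rw [extSmul_def, extSmul_def, extSmul_def]; exact Ext.add_comp e f _ _
  add_smul g h e := by
    rw [extSmul_def, extSmul_def, extSmul_def, Ext.mk₀_add', Ext.comp_add]
  zero_smul e := by rw [extSmul_def]; rw [Ext.mk₀_zero, Ext.comp_zero]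
  smul_zero g := by rw [extSmul_def]; exact Ext.zero_comp _ _ _ _ _

/-- The connecting map `c(ξ, K) : Hom(K₁, K) → Ext¹(Y, K)`, `u ↦ [u.ξ]`,
as a morphism of left `Γ(K) = End K`-modules. -/
noncomputable def SES.conn {K₁ Y : A} (E : SES K₁ Y) (K : A) :
    (K₁ ⟶ K) →ₗ[End K] Ext Y K 1 where
  toFun u := E.push u
  map_add' u v := by
    dsimp [SES.push]
    rw [Ext.mk₀_add', Ext.comp_add]
  map_smul' g u := by
    dsimp [SES.push]
    rw [End.smul_right, extSmul_def, Ext.comp_assoc_of_third_deg_zero,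
      Ext.mk₀_comp_mk₀]

/-- Right minimality for a morphism of modules. -/
def ModRightMinimal {R : Type*} [Ring R] {M N : Type*} [AddCommGroup M] [AddCommGroup N]
    [Module R M] [Module R N] (c : M →ₗ[R] N) : Prop :=
  ∀ g : M →ₗ[R] M, c.comp g = c → Function.Bijective g

universe w'

/-- The `R`-module `M` admits a projective cover. -/
def HasProjCover (R : Type*) [Ring R] (M : Type w') [AddCommGroup M] [Module R M] : Prop :=
  ∃ (P : Type w') (_ : AddCommGroup P) (_ : Module R P) (f : P →ₗ[R] M),
    Module.Projective R P ∧ Function.Surjective f ∧ ModRightMinimal f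

/-- `ξ` is a universal `L`-extension of `Y` by `K`. -/
def IsUniversalExt (K : A) {K₁ Y : A} (E : SES K₁ Y) (L : Submodule (End K) (Ext Y K 1)) :
    Prop :=
  InAdd K K₁ ∧ LinearMap.range (E.conn K) = L ∧ ModRightMinimal (E.conn K)

lemma InAdd.self (K : A) : InAdd K K := by
  refine ⟨1, biproduct.ι (fun _ : Fin 1 => K) (0 : Fin 1), biproduct.π (fun _ : Fin 1 => K) 0, ?_⟩
  simp

namespace Stmt8Aux

attribute [local instance] HasDerivedCategory.standard

open DerivedCategory

/-- The natural isomorphism `singleFunctor A 0 ⋙ H⁰ ≅ 𝟭 A`. -/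
noncomputable def singleCompH :
    DerivedCategory.singleFunctor A 0 ⋙ DerivedCategory.homologyFunctor A 0 ≅ 𝟭 A :=
  Functor.isoWhiskerRight ((SingleFunctors.evaluation _ _ 0).mapIso (singleFunctorsPostcompQIso A))
      (DerivedCategory.homologyFunctor A 0) ≪≫
    Functor.associator _ _ _ ≪≫
    Functor.isoWhiskerLeft (HomologicalComplex.single A (ComplexShape.up ℤ) 0)
      (DerivedCategory.homologyFunctorFactors A 0) ≪≫
    HomologicalComplex.homologyFunctorSingleIso A (ComplexShape.up ℤ) 0

/-- From an `Ext`-class in degree `0`, extract a morphism by applying `H⁰`. -/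
noncomputable def homOfExt0 {M N : A} (α : Abelian.Ext M N 0) : M ⟶ N :=
  singleCompH.inv.app M ≫
    (DerivedCategory.homologyFunctor A 0).map
      ((ShiftedHom.homEquiv (C := DerivedCategory A) ((0 : ℕ) : ℤ) (by simp)).symm α.hom) ≫
    singleCompH.hom.app N

lemma homOfExt0_mk₀ {M N : A} (f : M ⟶ N) : homOfExt0 (Abelian.Ext.mk₀ f) = f := by
  have h1 : (ShiftedHom.homEquiv (C := DerivedCategory A) ((0 : ℕ) : ℤ) (by simp)).symm
      (Abelian.Ext.mk₀ f).hom = (DerivedCategory.singleFunctor A 0).map f := by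
    rw [Abelian.Ext.mk₀_hom]
    rw [Equiv.symm_apply_eq]
    rfl
  rw [homOfExt0, h1, ← Functor.comp_map]
  have := singleCompH.inv.naturality f
  dsimp at this ⊢
  rw [← reassoc_of% this]
  simp

lemma homOfExt0_mk₀_comp {M N P : A} (f : M ⟶ N) (β : Abelian.Ext N P 0) :
    homOfExt0 ((Abelian.Ext.mk₀ f).comp β (zero_add 0)) = f ≫ homOfExt0 β := by
  have h1 : (ShiftedHom.homEquiv (C := DerivedCategory A) ((0 : ℕ) : ℤ) (by simp)).symm
      ((Abelian.Ext.mk₀ f).comp β (zero_add 0)).hom =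
      (DerivedCategory.singleFunctor A 0).map f ≫
        (ShiftedHom.homEquiv (C := DerivedCategory A) ((0 : ℕ) : ℤ) (by simp)).symm β.hom := by
    rw [Abelian.Ext.comp_hom, Abelian.Ext.mk₀_hom, ShiftedHom.mk₀_comp]
    dsimp [ShiftedHom.homEquiv]
    rw [Category.assoc]
  rw [homOfExt0, h1]
  rw [Functor.map_comp, ← Functor.comp_map]
  have := singleCompH.inv.naturality f
  dsimp at this ⊢
  simp only [Category.assoc]
  rw [← reassoc_of% this]
  simp [homOfExt0]

end Stmt8Aux


namespace Stmt8Aux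

lemma endLinear_apply {K : A} (h : (K ⟶ K) →ₗ[End K] (K ⟶ K)) (u : K ⟶ K) :
    h u = h (𝟙 K) ≫ u := by
  have h2 := h.map_smul (show End K from u) (𝟙 K)
  simp only [End.smul_right, Category.id_comp, RingHom.id_apply] at h2
  exact h2

lemma isIso_of_linear_bijective {K : A} (g : (K ⟶ K) →ₗ[End K] (K ⟶ K))
    (hbij : Function.Bijective g) : IsIso (g (𝟙 K)) := by
  let e := LinearEquiv.ofBijective g hbij
  have he : ∀ u, e u = g u := fun _ => rfl
  refine ⟨e.symm (𝟙 K), ?_, ?_⟩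
  · rw [← endLinear_apply g (e.symm (𝟙 K)), ← he]
    exact e.apply_symm_apply (𝟙 K)
  · have h1 := endLinear_apply e.symm.toLinearMap (g (𝟙 K))
    have h3 : e.symm.toLinearMap (𝟙 K) = e.symm (𝟙 K) := rfl
    have h2 : e.symm.toLinearMap (g (𝟙 K)) = 𝟙 K := e.symm_apply_apply (𝟙 K)
    rw [h2, h3] at h1
    exact h1.symm

lemma bijective_of_isIso {K : A} (g : (K ⟶ K) →ₗ[End K] (K ⟶ K)) (w : K ⟶ K)
    (hg : ∀ u, g u = w ≫ u) (hw : IsIso w) : Function.Bijective g := by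
  constructor
  · intro a b hab
    rw [hg, hg] at hab
    exact (cancel_epi w).mp hab
  · intro u
    exact ⟨inv w ≫ u, by rw [hg, IsIso.hom_inv_id_assoc]⟩

end Stmt8Aux

/-- `α` is right minimal iff the connecting map
`c(ξ, K) : Hom(K, K) → Ext¹(Y, K)` is right minimal as a morphism of `Γ(K)`-modules. -/
theorem stmt8 {K Y : A} (E : SES K Y) :
    RightMinimal E.p ↔ ModRightMinimal (E.conn K) := by
  have hmono : Mono E.i := E.shortExact.mono_f
  have hconn : ∀ u : K ⟶ K, E.conn K u = E.push u := fun _ => rfl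
  constructor
  · intro hmin g hcg
    have hc : ∀ u, E.push (g u) = E.push u := fun u => by
      have h := DFunLike.congr_fun hcg u
      rw [LinearMap.comp_apply, hconn, hconn] at h
      exact h
    have hg : ∀ u, g u = g (𝟙 K) ≫ u := fun u => Stmt8Aux.endLinear_apply g u
    set w := g (𝟙 K) with hw
    have hzero : E.cls.comp (Ext.mk₀ (w - 𝟙 K)) (add_zero 1) = 0 := by
      have h1 : E.conn K (w - 𝟙 K) = E.conn K w - E.conn K (𝟙 K) :=
        (E.conn K).map_sub w (𝟙 K)
      have h2 : E.push w = E.push (𝟙 K) := hc (𝟙 K)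
      have h3 : E.conn K (w - 𝟙 K) = 0 := by
        rw [h1, hconn, hconn, h2, sub_self]
      exact h3
    obtain ⟨x₂, hx₂⟩ := Ext.contravariant_sequence_exact₁ E.shortExact K
      (Ext.mk₀ (w - 𝟙 K)) (add_zero 1) hzero
    have hit : E.i ≫ Stmt8Aux.homOfExt0 x₂ = w - 𝟙 K := by
      rw [← Stmt8Aux.homOfExt0_mk₀_comp, hx₂, Stmt8Aux.homOfExt0_mk₀]
    set t := Stmt8Aux.homOfExt0 x₂ with ht
    set v := 𝟙 E.X + t ≫ E.i with hv
    have hvp : v ≫ E.p = E.p := by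
      rw [hv, Preadditive.add_comp, Category.id_comp, Category.assoc, E.zero,
        comp_zero, add_zero]
    have hiv : E.i ≫ v = w ≫ E.i := by
      rw [hv, Preadditive.comp_add, Category.comp_id, ← Category.assoc, hit,
        Preadditive.sub_comp, Category.id_comp]
      abel
    have hvi : IsIso v := hmin v hvp
    have hinvp : inv v ≫ E.p = E.p := by
      rw [IsIso.inv_comp_eq]
      exact hvp.symm
    obtain ⟨w', hw'⟩ := KernelFork.IsLimit.lift' E.shortExact.fIsKernel (E.i ≫ inv v)
      (by rw [Category.assoc, hinvp, E.zero])
    have hw'i : w' ≫ E.i = E.i ≫ inv v := hw'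
    have hww' : w ≫ w' = 𝟙 K := by
      rw [← cancel_mono E.i, Category.assoc, hw'i, ← Category.assoc, ← hiv,
        Category.assoc, IsIso.hom_inv_id, Category.comp_id, Category.id_comp]
    have hw'w : w' ≫ w = 𝟙 K := by
      rw [← cancel_mono E.i, Category.assoc, ← hiv, ← Category.assoc, hw'i,
        Category.assoc, IsIso.inv_hom_id, Category.comp_id, Category.id_comp]
    have hwiso : IsIso w := ⟨⟨w', hww', hw'w⟩⟩
    exact Stmt8Aux.bijective_of_isIso g w hg hwiso
  · intro hmod v hvp
    obtain ⟨s₀, hs₀⟩ := KernelFork.IsLimit.lift' E.shortExact.fIsKernel (v - 𝟙 E.X)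
      (by rw [Preadditive.sub_comp, hvp, Category.id_comp, sub_self])
    let s : E.X ⟶ K := s₀
    have hs' : s ≫ E.i = v - 𝟙 E.X := hs₀
    set w := 𝟙 K + E.i ≫ s with hwdef
    have hwi : w ≫ E.i = E.i ≫ v := by
      rw [hwdef, Preadditive.add_comp, Category.id_comp, Category.assoc, hs',
        Preadditive.comp_sub, Category.comp_id]
      abel
    have hpushis : E.push (E.i ≫ s) = 0 := by
      dsimp [SES.push]
      rw [← Ext.mk₀_comp_mk₀, ← Ext.comp_assoc_of_third_deg_zero,
        show E.cls.comp (Ext.mk₀ E.i) (add_zero 1) = 0 from E.shortExact.extClass_comp,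
        Ext.zero_comp]
    have hpushw : E.push w = E.cls := by
      have h1 : E.push w = E.push (𝟙 K) + E.push (E.i ≫ s) := by
        dsimp [SES.push]
        rw [hwdef, Ext.mk₀_add', Ext.comp_add]
      rw [h1, hpushis, add_zero]
      dsimp [SES.push]
      rw [Ext.comp_mk₀_id]
    let g : (K ⟶ K) →ₗ[End K] (K ⟶ K) :=
      { toFun := fun u => w ≫ u
        map_add' := fun a b => by simp [Preadditive.comp_add]
        map_smul' := fun r u => by
          simp only [End.smul_right, RingHom.id_apply, Category.assoc] }
    have hpc : ∀ u : K ⟶ K, E.push (w ≫ u) = (E.push w).comp (Ext.mk₀ u) (add_zero 1) := by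
      intro u
      dsimp [SES.push]
      rw [← Ext.mk₀_comp_mk₀, Ext.comp_assoc_of_third_deg_zero]
    have hcomp : (E.conn K).comp g = E.conn K := by
      apply LinearMap.ext
      intro u
      rw [LinearMap.comp_apply, hconn, hconn]
      show E.push (w ≫ u) = E.push u
      rw [hpc, hpushw]
      rfl
    have hbij := hmod g hcomp
    have hgone : g (𝟙 K) = w := Category.comp_id w
    have hwiso : IsIso w := by
      have h := Stmt8Aux.isIso_of_linear_bijective g hbij
      rwa [hgone] at h
    let φ : ShortComplex.mk E.i E.p E.zero ⟶ ShortComplex.mk E.i E.p E.zero :=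
      { τ₁ := w
        τ₂ := v
        τ₃ := 𝟙 Y
        comm₁₂ := hwi
        comm₂₃ := by simpa using hvp }
    exact ShortComplex.isIso₂_of_shortExact_of_isIso₁₃' φ E.shortExact E.shortExact
      hwiso inferInstance
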